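/- Derivative of the CVaR constraint term with respect to the tolerance level (Eq. 21): Let (Ω, μ) be a probability space and X : Ω → ℝ an integrable random variable. Fix v₀ ∈ ℝ such that μ {ω | X ω = v₀} = 0. Then the function g : ℝ → ℝ defined by g v := ∫ max 0 (X ω − v) ∂μ(ω) is differentiable at v₀ with derivative g' v₀ = −(μ {ω | X ω ≥ v₀}).toReal, i.e., minus the probability of the event {X ≥ v₀}. -/

import Mathlib

open MeasureTheory

/-- Derivative of the CVaR constraint term with respect to the tolerance level
(Eq. 21): if `μ {X = v₀} = 0`, then `v ↦ ∫ max 0 (X - v) dμ` is differentiable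
at `v₀` with derivative `-(μ {X ≥ v₀})`. -/
theorem hasDerivAt_cvar_constraint_term {Ω : Type*} [MeasurableSpace Ω]
    (μ : Measure Ω) [IsProbabilityMeasure μ] (X : Ω → ℝ)
    (hX : Integrable X μ) (v₀ : ℝ) (h0 : μ {ω | X ω = v₀} = 0) :
    HasDerivAt (fun v : ℝ => ∫ ω, max 0 (X ω - v) ∂μ)
      (-(μ {ω | v₀ ≤ X ω}).toReal) v₀ := by
  set F' : Ω → ℝ := fun ω => if v₀ < X ω then (-1 : ℝ) else 0 with hF'def
  have hXm : AEMeasurable X μ := hX.aemeasurable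
  -- measurability of each slice
  have hF_meas : ∀ᶠ v in nhds v₀,
      AEStronglyMeasurable (fun ω => max 0 (X ω - v)) μ := by
    filter_upwards with v
    exact (aemeasurable_const.max (hXm.sub aemeasurable_const)).aestronglyMeasurable
  have hF_int : Integrable (fun ω => max 0 (X ω - v₀)) μ := by
    have h1 : Integrable (fun ω => X ω - v₀) μ := hX.sub (integrable_const v₀)
    have := h1.pos_part
    simpa [max_comm] using this
  have hg : Measurable (fun t : ℝ => if v₀ < t then (-1 : ℝ) else 0) :=
    Measurable.ite (measurableSet_lt measurable_const measurable_id) measurable_const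
      measurable_const
  have hF'_meas : AEStronglyMeasurable F' μ :=
    (hg.comp_aemeasurable hXm).aestronglyMeasurable
  have h_lip : ∀ᵐ ω ∂μ, LipschitzOnWith (Real.nnabs (1 : ℝ))
      (fun v => max 0 (X ω - v)) (Metric.ball v₀ 1) := by
    filter_upwards with ω
    have : LipschitzWith 1 (fun v => max 0 (X ω - v)) := by
      apply LipschitzWith.of_dist_le_mul
      intro a b
      simp only [Real.dist_eq, NNReal.coe_one, one_mul]
      calc |max 0 (X ω - a) - max 0 (X ω - b)|
          = |max (X ω - a) 0 - max (X ω - b) 0| := by rw [max_comm, max_comm (X ω - b)]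
        _ ≤ |(X ω - a) - (X ω - b)| := abs_max_sub_max_le_abs _ _ _
        _ = |a - b| := by rw [abs_sub_comm]; ring_nf
    simpa using this.lipschitzOnWith (s := Metric.ball v₀ 1)
  have h_diff : ∀ᵐ ω ∂μ, HasDerivAt (fun v => max 0 (X ω - v)) (F' ω) v₀ := by
    have hne : ∀ᵐ ω ∂μ, X ω ≠ v₀ := by
      rw [ae_iff]; simpa using h0
    filter_upwards [hne] with ω hω
    rcases lt_or_gt_of_ne hω with hlt | hgt
    · -- X ω < v₀ : locally zero
      have h0' : HasDerivAt (fun _ : ℝ => (0 : ℝ)) 0 v₀ := hasDerivAt_const _ _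
      have heq : (fun v => max 0 (X ω - v)) =ᶠ[nhds v₀] fun _ => (0 : ℝ) := by
        have : ∀ᶠ v in nhds v₀, X ω < v := eventually_gt_nhds hlt
        filter_upwards [this] with v hv
        simp [max_eq_left, sub_nonpos.mpr hv.le]
      have hF'0 : F' ω = 0 := by simp [hF'def, not_lt.mpr hlt.le]
      rw [hF'0]
      exact h0'.congr_of_eventuallyEq heq
    · -- v₀ < X ω : locally X ω - v
      have h1 : HasDerivAt (fun v : ℝ => X ω - v) (-1) v₀ := by
        simpa using (hasDerivAt_id v₀).const_sub (X ω)
      have heq : (fun v => max 0 (X ω - v)) =ᶠ[nhds v₀] fun v => X ω - v := by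
        have : ∀ᶠ v in nhds v₀, v < X ω := eventually_lt_nhds hgt
        filter_upwards [this] with v hv
        simp [max_eq_right, sub_nonneg.mpr hv.le]
      have hF'1 : F' ω = -1 := by simp [hF'def, hgt]
      rw [hF'1]
      exact h1.congr_of_eventuallyEq heq
  have key := (hasDerivAt_integral_of_dominated_loc_of_lip (F := fun v ω => max 0 (X ω - v))
      (μ := μ) (bound := fun _ => (1 : ℝ)) (Metric.ball_mem_nhds v₀ zero_lt_one) hF_meas hF_int hF'_meas h_lip
      (integrable_const 1) h_diff).2
  -- compute the integral of F'
  have hsnull : NullMeasurableSet {ω | v₀ < X ω} μ :=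
    nullMeasurableSet_lt aemeasurable_const hXm
  obtain ⟨t, htm, hts⟩ := hsnull
  have hae : {ω | v₀ < X ω} =ᵐ[μ] t := hts
  have hint : ∫ ω, F' ω ∂μ = -(μ {ω | v₀ < X ω}).toReal := by
    have h1 : F' =ᵐ[μ] fun ω => t.indicator (fun _ => (-1 : ℝ)) ω := by
      filter_upwards [hae] with ω hω
      have hω' : (ω ∈ {ω | v₀ < X ω}) = (ω ∈ t) := hω
      by_cases h : v₀ < X ω
      · have : ω ∈ t := by rw [← hω']; exact h
        simp [hF'def, h, Set.indicator_of_mem this]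
      · have : ω ∉ t := by rw [← hω']; exact h
        simp [hF'def, h, Set.indicator_of_notMem this]
    rw [integral_congr_ae h1, integral_indicator_const _ htm,
      measureReal_def, ← measure_congr hae]
    simp
  have hmeq : μ {ω | v₀ ≤ X ω} = μ {ω | v₀ < X ω} := by
    apply le_antisymm
    · have hsub : {ω | v₀ ≤ X ω} ⊆ {ω | v₀ < X ω} ∪ {ω | X ω = v₀} := by
        intro ω hω
        simp only [Set.mem_setOf_eq] at hω
        rcases lt_or_eq_of_le hω with h | h
        · exact Or.inl h
        · exact Or.inr h.symm
      calc μ {ω | v₀ ≤ X ω} ≤ μ ({ω | v₀ < X ω} ∪ {ω | X ω = v₀}) := measure_mono hsub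
        _ ≤ μ {ω | v₀ < X ω} + μ {ω | X ω = v₀} := measure_union_le _ _
        _ = μ {ω | v₀ < X ω} := by rw [h0, add_zero]
    · exact measure_mono fun ω hω => le_of_lt (by simpa using hω)
  rw [hint] at key
  rw [hmeq]
  exact key
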